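/- The infinite Brown's lemma implies the finite Brown's lemma: assuming that every finite coloring of ℕ has a monochromatic piecewise syndetic set, for every f : ℕ → ℕ and every r > 0 there exists n such that every r-coloring of {0,…,n−1} has a monochromatic set H with |H| > f(gs(H)). (This is a compactness/König's lemma argument.) -/

import Mathlib

/-- `H` has gaps bounded by `d`: any element with a successor in `H` has one within `d`. -/
def GapsBdd (H : Finset ℕ) (d : ℕ) : Prop :=
  ∀ x ∈ H, (∃ y ∈ H, x < y) → ∃ z ∈ H, x < z ∧ z ≤ x + d

/-- gap size: largest difference between consecutive elements; `1` if `|H| ≤ 1`. -/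
noncomputable def gapSize (H : Finset ℕ) : ℕ :=
  if H.card ≤ 1 then 1 else sInf {d | GapsBdd H d}

/-- `X` is piecewise `d`-syndetic. -/
def PWSyndWith (d : ℕ) (X : Set ℕ) : Prop :=
  ∀ n : ℕ, ∃ H : Finset ℕ, (∀ x ∈ H, x ∈ X) ∧ n ≤ H.card ∧ GapsBdd H d

/-- `X` is piecewise syndetic. -/
def PWSynd (X : Set ℕ) : Prop := ∃ d, PWSyndWith d X

/-- consecutive elements of `X` differ by at most `d`. -/
def SyndWith (d : ℕ) (X : Set ℕ) : Prop :=
  ∀ x ∈ X, ∃ y ∈ X, x < y ∧ y ≤ x + d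

/-- `X` is syndetic: an infinite set with bounded gaps. -/
def Syndetic (X : Set ℕ) : Prop := X.Infinite ∧ ∃ d, SyndWith d X

/-- `X` is thick: contains arbitrarily long intervals. -/
def Thick (X : Set ℕ) : Prop := ∀ n : ℕ, ∃ a : ℕ, ∀ m, a ≤ m → m < a + n → m ∈ X

/-- `X` contains arbitrarily long arithmetic progressions. -/
def APSet (X : Set ℕ) : Prop := ∀ l : ℕ, ∃ a e : ℕ, 0 < e ∧ ∀ i < l, a + i * e ∈ X

/-- The infinite Brown's lemma implies the finite Brown's lemma. -/
theorem infinite_to_finite_brown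
    (hBrown : ∀ (r : ℕ) (C : ℕ → Fin r), ∃ i : Fin r, PWSynd {x : ℕ | C x = i}) :
    ∀ (f : ℕ → ℕ) (r : ℕ), 0 < r →
      ∃ n : ℕ, ∀ C : ℕ → Fin r, ∃ H : Finset ℕ,
        (∀ x ∈ H, x < n) ∧ (∀ x ∈ H, ∀ y ∈ H, C x = C y) ∧ f (gapSize H) < H.card := by
  intro f r hr
  by_contra hcon
  push_neg at hcon
  -- for each n, a bad coloring
  choose D hD using hcon
  set U := Filter.hyperfilter ℕ with hU
  -- limit coloring
  have hex : ∀ x : ℕ, ∃ i : Fin r, {n : ℕ | D n x = i} ∈ U := by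
    intro x
    obtain ⟨a, ha⟩ := (U.map (fun n => D n x)).eq_pure_of_finite
    exact ⟨a, by
      have : {a} ∈ U.map (fun n => D n x) := by rw [ha]; exact rfl
      exact this⟩
  choose C hC using hex
  obtain ⟨i, d, hpw⟩ := hBrown r C
  obtain ⟨H, hHC, hcard, hgaps⟩ := hpw ((Finset.range (d+1)).sup f + 2)
  -- gapSize bound
  have hcard2 : 2 ≤ H.card := le_trans (by omega) hcard
  have hgs : gapSize H ≤ d := by
    rw [gapSize, if_neg (by omega)]
    exact Nat.sInf_le hgaps
  have hf : f (gapSize H) < H.card := by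
    have : f (gapSize H) ≤ (Finset.range (d+1)).sup f :=
      Finset.le_sup (Finset.mem_range.mpr (by omega))
    omega
  -- find n agreeing with C on H and exceeding H
  have hmem : (⋂ x ∈ H, {n : ℕ | D n x = C x}) ∩ {n : ℕ | ∀ x ∈ H, x < n} ∈ U := by
    apply Filter.inter_mem
    · exact (Filter.biInter_finset_mem H).mpr (fun x _ => hC x)
    · apply Filter.hyperfilter_le_cofinite
      apply Set.Finite.subset (Set.finite_Iic (H.sup id))
      intro n hn
      simp only [Set.mem_compl_iff, Set.mem_setOf_eq, not_forall, not_lt] at hn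
      obtain ⟨x, hx, hnx⟩ := hn
      exact Set.mem_Iic.mpr (le_trans hnx (Finset.le_sup (f := id) hx))
  obtain ⟨n, hn1, hn2⟩ := Filter.nonempty_of_mem hmem
  simp only [Set.mem_iInter, Set.mem_setOf_eq] at hn1
  have := hD n H hn2 (fun x hx y hy => by
    rw [hn1 x hx, hn1 y hy]
    have : C x = i := hHC x hx
    have : C y = i := hHC y hy
    simp_all)
  omega
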